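/- For odd k, define f_k = (1+χ^k)·(1-χ^k)^{-1} and f'_k = (1-χ+χ^2-⋯+χ^{k-1})·(1+χ+χ^2+⋯+χ^{k-1})^{-1} in ℚ[χ]/⟨1+χ+⋯+χ^{N-1}⟩ with N = 2^K. Then f_k = f_1 · f'_k, the element f_k lies in the (-1)-eigenspace (f_k(χ^{-1}) = -f_k(χ)), and f'_k lies in the image of ℤ[χ]/⟨1+χ+⋯+χ^{N-1}⟩. -/

import Mathlib

set_option maxHeartbeats 1000000
set_option synthInstance.maxHeartbeats 1000000

noncomputable section
open Polynomial

/-- The quotient ring ℚ[χ]/⟨1+χ+⋯+χ^{2^K-1}⟩. -/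
abbrev QB (K : ℕ) :=
  Polynomial ℚ ⧸ Ideal.span {(∑ i ∈ Finset.range (2 ^ K), X ^ i : Polynomial ℚ)}

def mkB (K : ℕ) : Polynomial ℚ →+* QB K := Ideal.Quotient.mk _

/-- f = f₁ = (1+χ)·(1-χ)⁻¹. -/
def fQ (K : ℕ) : QB K := mkB K (1 + X) * Ring.inverse (mkB K (1 - X))

/-- f_k = (1+χ^k)·(1-χ^k)⁻¹. -/
def fkQ (K k : ℕ) : QB K := mkB K (1 + X ^ k) * Ring.inverse (mkB K (1 - X ^ k))

/-- f'_k = (1-χ+χ²-⋯+χ^{k-1})·(1+χ+χ²+⋯+χ^{k-1})⁻¹. -/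
def fk'Q (K k : ℕ) : QB K :=
  mkB K (∑ i ∈ Finset.range k, C ((-1 : ℚ) ^ i) * X ^ i) *
    Ring.inverse (mkB K (∑ i ∈ Finset.range k, X ^ i))

namespace Stmt7Aux
open Finset

variable (K : ℕ)

lemma qsmul_def (c : ℚ) (x : QB K) : c • x = algebraMap ℚ (QB K) c * x :=
  Algebra.smul_def c x

lemma phi0 : mkB K (∑ i ∈ Finset.range (2 ^ K), X ^ i) = 0 :=
  Ideal.Quotient.eq_zero_iff_mem.mpr (Ideal.subset_span rfl)

lemma uN : (mkB K X) ^ (2 ^ K) = 1 := by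
  have h := congrArg (mkB K) (geom_sum_mul (X : Polynomial ℚ) (2 ^ K))
  rw [map_mul, phi0, zero_mul, map_sub, map_pow, map_one] at h
  exact (sub_eq_zero.mp h.symm)

/-- `X` as a unit of `QB K`. -/
def U : (QB K)ˣ where
  val := mkB K X
  inv := (mkB K X) ^ (2 ^ K - 1)
  val_inv := by
    rw [← pow_succ']
    rw [Nat.sub_add_cancel Nat.one_le_two_pow]
    exact uN K
  inv_val := by
    rw [← pow_succ]
    rw [Nat.sub_add_cancel Nat.one_le_two_pow]
    exact uN K

/-- `χ^z` for integer `z`. -/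
def w (z : ℤ) : QB K := ((U K ^ z : (QB K)ˣ) : QB K)

lemma w_natCast (n : ℕ) : w K n = (mkB K X) ^ n := by
  simp [w, zpow_natCast, U]

lemma w_add (a b : ℤ) : w K (a + b) = w K a * w K b := by
  simp [w, zpow_add]

lemma w_zero : w K 0 = 1 := by simp [w]

lemma UN : (U K) ^ ((2:ℤ) ^ K) = 1 := by
  have : ((2:ℤ)^K) = ((2^K : ℕ) : ℤ) := by push_cast; ring
  rw [this, zpow_natCast]
  ext
  push_cast [Units.val_pow_eq_pow_val]
  exact uN K

lemma w_period (a b : ℤ) (h : ((2:ℤ) ^ K) ∣ (a - b)) : w K a = w K b := by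
  obtain ⟨t, ht⟩ := h
  have ha : a = b + 2 ^ K * t := by linarith
  unfold w
  rw [ha, zpow_add, zpow_mul, UN, one_zpow, mul_one]

lemma w_mul_nat (a : ℤ) (n : ℕ) : w K (a * n) = (w K a) ^ n := by
  unfold w
  rw [zpow_mul, zpow_natCast, Units.val_pow_eq_pow_val]

/-- weighted geometric sum identity, general. -/
lemma weighted_geom {R : Type*} [CommRing R] (v : R) (n : ℕ) :
    (∑ i ∈ range n, (i : R) * v ^ i) * (1 - v) =
      (∑ i ∈ range n, v ^ i) - 1 - ((n : R) - 1) * v ^ n := by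
  induction n with
  | zero => simp
  | succ n ih =>
    rw [sum_range_succ, sum_range_succ, add_mul, ih]
    push_cast
    ring

lemma one_sub_geom {R : Type*} [CommRing R] (x : R) (n : ℕ) :
    (1 - x) * (∑ i ∈ range n, x ^ i) = 1 - x ^ n := by
  have h := geom_sum_mul x n
  have : (1 - x) * (∑ i ∈ range n, x ^ i) = -((∑ i ∈ range n, x ^ i) * (x - 1)) := by ring
  rw [this, h]; ring

lemma Npos : (0:ℚ) < (2 ^ K : ℕ) := by positivity

lemma isUnit_one_sub_u : IsUnit (1 - mkB K X) := by
  obtain ⟨g, hg⟩ := Polynomial.X_sub_C_dvd_sub_C_eval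
    (a := (1:ℚ)) (p := ∑ i ∈ Finset.range (2 ^ K), X ^ i)
  have heval : (∑ i ∈ Finset.range (2 ^ K), (X:Polynomial ℚ) ^ i).eval 1 = ((2^K : ℕ) : ℚ) := by
    simp
  rw [heval] at hg
  apply IsUnit.of_mul_eq_one (mkB K g * mkB K (C (((2^K : ℕ) : ℚ))⁻¹))
  have h2 := congrArg (mkB K) hg
  rw [map_sub, phi0, map_mul, map_sub, C_1, map_one] at h2
  have h3 : (1 - mkB K X) * mkB K g = mkB K (C ((2^K : ℕ) : ℚ)) := by
    linear_combination h2
  rw [← mul_assoc, h3, ← map_mul, ← C_mul,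
    mul_inv_cancel₀ (ne_of_gt (Npos K)), map_one, map_one]

variable {K} {k : ℕ} (hK : 1 ≤ K) (hk : Odd k)

include hK hk in
lemma exists_m : ∃ m : ℕ, k * m % 2 ^ K = 1 := by
  obtain ⟨m, -, hm⟩ := Nat.exists_mul_mod_eq_one_of_coprime (k := 2 ^ K) (hk.coprime_two_right.pow_right _)
    (Nat.one_lt_two_pow_iff.mpr (by omega))
  exact ⟨m, hm⟩

omit hK hk in
lemma uk_eq : (mkB K X) ^ k = w K k := (w_natCast K k).symm

omit hK hk in
lemma wk_pow_m {m : ℕ} (hm : k * m % 2 ^ K = 1) : (w K k) ^ m = mkB K X := by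
  have h1 : w K ((k : ℤ) * m) = (w K k) ^ m := w_mul_nat K k m
  rw [← h1, ← pow_one (mkB K X), uk_eq (k := 1)]
  apply w_period
  have hd : k * m = 2 ^ K * (k * m / 2 ^ K) + 1 := by
    conv_lhs => rw [← Nat.div_add_mod (k * m) (2 ^ K), hm]
  refine ⟨(k * m / 2 ^ K : ℕ), ?_⟩
  zify at hd
  push_cast
  linarith

omit hK hk in
lemma inv_of_mul_eq_one {R : Type*} [CommMonoidWithZero R] {a b : R} (h : a * b = 1) :
    Ring.inverse a = b := by
  have ha : IsUnit a := IsUnit.of_mul_eq_one _ h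
  rw [← mul_one (Ring.inverse a), ← h, ← mul_assoc, Ring.inverse_mul_cancel _ ha, one_mul]

omit hK hk in
lemma one_sub_wk_mul {m : ℕ} (hm : k * m % 2 ^ K = 1) :
    (1 - w K k) * (∑ j ∈ range m, (w K k) ^ j) = 1 - mkB K X := by
  rw [one_sub_geom, wk_pow_m hm]

omit hK hk in
lemma isUnit_one_sub_wk {m : ℕ} (hm : k * m % 2 ^ K = 1) : IsUnit (1 - w K k) := by
  apply IsUnit.of_mul_eq_one
    ((∑ j ∈ range m, (w K k) ^ j) * Ring.inverse (1 - mkB K X))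
  rw [← mul_assoc, one_sub_wk_mul hm, Ring.mul_inverse_cancel _ (isUnit_one_sub_u K)]

omit hK hk in
lemma one_sub_u_mul_S :
    (1 - mkB K X) * (∑ i ∈ range k, (mkB K X) ^ i) = 1 - w K k := by
  rw [one_sub_geom, uk_eq]

omit hK in
include hk in
lemma one_add_u_mul_A :
    (1 + mkB K X) * (∑ i ∈ range k, (-(mkB K X)) ^ i) = 1 + w K k := by
  have h := one_sub_geom (-(mkB K X)) k
  have h2 : (-(mkB K X)) ^ k = -((mkB K X) ^ k) := by
    exact hk.neg_pow (mkB K X)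
  rw [sub_neg_eq_add, h2, sub_neg_eq_add] at h
  rw [h, uk_eq]

omit hK hk in
lemma S_mul_T {m : ℕ} (hm : k * m % 2 ^ K = 1) :
    (∑ i ∈ range k, (mkB K X) ^ i) * (∑ j ∈ range m, (w K k) ^ j) = 1 := by
  apply (isUnit_one_sub_u K).mul_left_cancel
  rw [← mul_assoc, one_sub_u_mul_S, one_sub_wk_mul hm, mul_one]

omit hK hk in
lemma mkS : mkB K (∑ i ∈ Finset.range k, X ^ i) = ∑ i ∈ range k, (mkB K X) ^ i := by
  simp [map_sum, map_pow]

omit hK hk in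
lemma mkA : mkB K (∑ i ∈ Finset.range k, C ((-1 : ℚ) ^ i) * X ^ i) =
    ∑ i ∈ range k, (-(mkB K X)) ^ i := by
  rw [map_sum]
  refine Finset.sum_congr rfl fun i _ => ?_
  have h : (C ((-1 : ℚ) ^ i) * X ^ i : Polynomial ℚ) = (-X) ^ i := by
    rw [C_pow, ← mul_pow, C_neg, C_1, neg_one_mul]
  rw [h, map_pow, map_neg]

include hK hk in
lemma main_identity {m : ℕ} (hm : k * m % 2 ^ K = 1) :
    fkQ K k = ∑ j ∈ Finset.range (2 ^ (K - 1) - 1),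
      (1 - (j + 1 : ℚ) * (2 / (2 ^ K : ℚ))) •
        (w K ((k : ℤ) * (j + 1)) - w K (-((k : ℤ) * (j + 1)))) := by
  have hvu : IsUnit (1 - w K k) := isUnit_one_sub_wk hm
  set v := w K k with hv
  -- Step A
  have hfk : fkQ K k = (1 + v) * Ring.inverse (1 - v) := by
    unfold fkQ
    rw [map_sub, map_add, map_one, map_pow, uk_eq]
  have hA : (1 - v) * fkQ K k = 1 + v := by
    rw [hfk, mul_comm (1 + v), ← mul_assoc, Ring.mul_inverse_cancel _ hvu, one_mul]
  -- abbreviations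
  set n := 2 ^ (K - 1) - 1 with hn
  set a : ℚ := 2 / (2 ^ K : ℚ) with ha
  have h2K : (2:ℚ) ^ K ≠ 0 := by positivity
  have hn1 : 2 ^ (K - 1) = n + 1 := (Nat.succ_pred_eq_of_pos (by positivity)).symm
  have hNnat : (2:ℕ) ^ K = 2 * (n + 1) := by
    rw [← hn1]
    cases K with
    | zero => omega
    | succ t => rw [Nat.succ_sub_one, pow_succ]; ring
  have hNn : (2:ℚ) ^ K = 2 * (n + 1) := by exact_mod_cast hNnat
  have hNZ : (2:ℤ) ^ K = 2 * ((n:ℤ) + 1) := by exact_mod_cast hNnat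
  have hcn1 : (1:ℚ) - (n + 1) * a = 0 := by
    rw [ha]; field_simp [hNn]; linarith [hNn]
  have hcn : (1:ℚ) - n * a = a := by
    have : (1:ℚ) - (n+1)*a + a = a - 0 := by rw [hcn1]; ring
    linarith [this]
  set D : ℕ → QB K := fun i => (1 - (i:ℚ) * a) • w K ((k:ℤ) * i) with hD
  set E : ℕ → QB K := fun i => (1 - (i:ℚ) * a) • w K (-((k:ℤ) * i)) with hE
  set SUM : QB K := ∑ j ∈ Finset.range n,
      (1 - (j + 1 : ℚ) * (2 / (2 ^ K : ℚ))) •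
        (w K ((k : ℤ) * (j + 1)) - w K (-((k : ℤ) * (j + 1)))) with hSUM
  -- step 1
  have hstep1 : (1 - v) * SUM
      = (D 1 - D (n+1)) + (E 0 - E n)
        - a • ((∑ j ∈ Finset.range n, w K ((k:ℤ) * (j+2)))
              + ∑ j ∈ Finset.range n, w K (-((k:ℤ) * j))) := by
    rw [hSUM, Finset.mul_sum]
    have hterm : ∀ j ∈ Finset.range n,
        (1 - v) * ((1 - (j + 1 : ℚ) * (2 / (2 ^ K : ℚ))) •
          (w K ((k : ℤ) * (j + 1)) - w K (-((k : ℤ) * (j + 1)))))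
        = ((D (j+1) - D (j+1+1)) + (E j - E (j+1)))
          - a • (w K ((k:ℤ) * (j+2)) + w K (-((k:ℤ) * j))) := by
      intro j _
      have e1 : v * w K ((k:ℤ) * (j+1)) = w K ((k:ℤ) * (j+2)) := by
        rw [hv, ← w_add]; congr 1; push_cast; ring
      have e2 : v * w K (-((k:ℤ) * (j+1))) = w K (-((k:ℤ) * j)) := by
        rw [hv, ← w_add]; congr 1; push_cast; ring
      have hc2 : (1:ℚ) - (j+1+1) * a = (1 - (j+1) * a) - a := by push_cast; ring
      have hc0 : (1:ℚ) - j * a = (1 - (j+1) * a) + a := by push_cast; ring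
      rw [hD, hE]
      simp only [Nat.cast_add, Nat.cast_one, hc2, hc0,
        show ((j:ℤ) + 1 + 1) = ((j:ℤ) + 2) by ring,
        show ((j:ℚ) + 1 + 1) = ((j:ℚ) + 2) by ring]
      rw [sub_mul, one_mul, mul_smul_comm, mul_sub, e1, e2]
      push_cast
      module
    rw [Finset.sum_congr rfl hterm, Finset.sum_sub_distrib, Finset.sum_add_distrib,
      Finset.sum_range_sub' (fun j => D (j+1)) n, Finset.sum_range_sub' E n,
      ← Finset.smul_sum, Finset.sum_add_distrib, smul_add]
  -- evaluate pieces
  have hD1 : D 1 = (1 - a) • v := by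
    rw [hD]; simp [hv]
  have hDn1 : D (n+1) = 0 := by
    rw [hD]; simp only [Nat.cast_add, Nat.cast_one]
    rw [hcn1, zero_smul]
  have hE0 : E 0 = 1 := by
    rw [hE]; simp [w_zero]
  have hEn : E n = a • w K (-((k:ℤ) * n)) := by
    simp only [hE]
    rw [hcn]
  have hQ : w K (-((k:ℤ) * n)) = w K ((k:ℤ) * n) * v ^ 2 := by
    have h1 : w K ((k:ℤ) * n) * v ^ 2 = w K ((k:ℤ) * n + (k:ℤ) * 2) := by
      rw [hv, ← w_mul_nat, ← w_add]
      norm_num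
    rw [h1]
    apply w_period
    refine ⟨-(k:ℤ), ?_⟩
    linear_combination (k:ℤ) * hNZ
  have hS1 : (1 - v) * (∑ j ∈ Finset.range n, w K ((k:ℤ) * (j+2)))
      = v^2 - v^2 * w K ((k:ℤ) * n) := by
    have he : ∀ j ∈ Finset.range n, w K ((k:ℤ) * (j+2)) = v^2 * v^j := by
      intro j _
      rw [hv, ← w_mul_nat, ← w_mul_nat, ← w_add]
      congr 1; push_cast; ring
    have hvn : v ^ n = w K ((k:ℤ) * n) := by rw [hv, ← w_mul_nat]
    rw [Finset.sum_congr rfl he, ← Finset.mul_sum]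
    calc (1 - v) * (v^2 * ∑ i ∈ Finset.range n, v^i)
        = v^2 * ((1 - v) * ∑ i ∈ Finset.range n, v^i) := by ring
      _ = v^2 * (1 - v^n) := by rw [one_sub_geom]
      _ = v^2 - v^2 * w K ((k:ℤ) * n) := by rw [hvn]; ring
  have hS2 : (1 - v) * (∑ j ∈ Finset.range n, w K (-((k:ℤ) * j)))
      = -v + v * w K (-((k:ℤ) * n)) := by
    have he : ∀ j ∈ Finset.range n, w K (-((k:ℤ) * j)) = (w K (-(k:ℤ)))^j := by
      intro j _
      rw [← w_mul_nat]; congr 1; ring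
    have hone : v * w K (-(k:ℤ)) = 1 := by rw [hv, ← w_add]; simp [w_zero]
    have hfac : (1 - v) = -v * (1 - w K (-(k:ℤ))) := by linear_combination -hone
    have h3 : (w K (-(k:ℤ)))^n = w K (-((k:ℤ) * n)) := by
      rw [← w_mul_nat]; congr 1; ring
    rw [Finset.sum_congr rfl he, hfac, mul_assoc, one_sub_geom, h3]
    ring
  -- step 2
  have hv2 : IsUnit ((1 - v)^2) := hvu.pow 2
  apply hv2.mul_left_cancel
  have lhs2 : (1 - v)^2 * fkQ K k = (1 - v) * (1 + v) := by
    rw [sq, mul_assoc, hA]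
  rw [lhs2]
  have rhs2 : (1 - v)^2 * SUM = (1 - v) * (1 + v) := by
    rw [sq, mul_assoc, hstep1, hD1, hDn1, hE0, hEn, hQ]
    simp only [qsmul_def, map_sub, map_one] at hS1 hS2 ⊢
    linear_combination (-(algebraMap ℚ (QB K) a)) * hS1 + (-(algebraMap ℚ (QB K) a)) * hS2
      + (-(v * algebraMap ℚ (QB K) a)) * hQ
  rw [rhs2]

def Mspan (K : ℕ) : Submodule ℚ (QB K) :=
  Submodule.span ℚ {x : QB K | ∃ r : ℕ, 1 ≤ r ∧ r ≤ 2 ^ K / 2 - 1 ∧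
    x = mkB K (X ^ r - X ^ (2 ^ K - r))}

omit hk in
include hK in
lemma pow_split : (2:ℕ) ^ K = 2 * 2 ^ (K - 1) := by
  cases K with
  | zero => omega
  | succ t => rw [Nat.succ_sub_one, pow_succ]; ring

omit hk in
include hK in
lemma mem_base {r : ℕ} (h1 : 1 ≤ r) (h2 : r < 2 ^ (K - 1)) :
    (mkB K X) ^ r - (mkB K X) ^ (2 ^ K - r) ∈ Mspan K := by
  apply Submodule.subset_span
  refine ⟨r, h1, ?_, by rw [map_sub, map_pow, map_pow]⟩
  have hdiv : 2 ^ K / 2 = 2 ^ (K - 1) := by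
    rw [pow_split hK, Nat.mul_div_cancel_left _ (by norm_num)]
  omega

omit hk in
include hK in
lemma mem_span_w {z : ℤ} (hz : ¬ ((2:ℤ) ^ (K - 1) ∣ z)) :
    w K z - w K (-z) ∈ Mspan K := by
  set N : ℕ := 2 ^ K with hN
  have hNpos : (0:ℤ) < (N:ℤ) := by positivity
  set r : ℕ := (z % (N:ℤ)).toNat with hr
  have hNc : ((N:ℕ):ℤ) = (2:ℤ) ^ K := by rw [hN]; push_cast; ring
  have hr0 : 0 ≤ z % (N:ℤ) := Int.emod_nonneg z (ne_of_gt hNpos)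
  have hrN : z % (N:ℤ) < N := Int.emod_lt_of_pos z hNpos
  have hrz : (r:ℤ) = z % (N:ℤ) := Int.toNat_of_nonneg hr0
  have hNK : ((N:ℤ)) = 2 ^ (K-1) * 2 := by
    rw [hN]; exact_mod_cast (by rw [pow_split hK]; ring : (2:ℕ)^K = 2^(K-1)*2)
  have hzdef : z = (N:ℤ) * (z / N) + r := by rw [hrz, Int.emod_def]; ring
  have hzr : w K z = w K (r:ℤ) := w_period K _ _ ⟨z / N, by rw [hrz, Int.emod_def, ← hNc]; ring⟩
  have hzr' : w K (-z) = w K ((N:ℤ) - r) :=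
    w_period K _ _ ⟨-(z / N) - 1, by rw [hrz, Int.emod_def, ← hNc]; ring⟩
  have hrle : r ≤ N := by omega
  have hr_ne0 : r ≠ 0 := by
    intro h0
    apply hz
    have h1 : (N:ℤ) ∣ z := ⟨z / N, by omega⟩
    exact dvd_trans ⟨2, hNK⟩ h1
  have hr_ne_h : r ≠ 2 ^ (K - 1) := by
    intro h0
    apply hz
    have h1 : ((2:ℤ) ^ (K-1)) ∣ (N:ℤ) := ⟨2, hNK⟩
    have h2 : ((2:ℤ) ^ (K-1)) ∣ (r:ℤ) := ⟨1, by rw [h0]; push_cast; ring⟩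
    rw [hzdef]
    exact dvd_add (h1.mul_right _) h2
  have e2 : ∀ s : ℕ, s ≤ N → w K ((N:ℤ) - s) = (mkB K X) ^ (N - s) := by
    intro s hs
    rw [show ((N:ℤ) - s) = ((N - s : ℕ) : ℤ) by push_cast [hs]; ring, w_natCast]
  rcases Nat.lt_or_ge r (2 ^ (K - 1)) with hlt | hge
  · rw [hzr, hzr', w_natCast, e2 r hrle]
    exact mem_base hK (by omega) hlt
  · have hgt : 2 ^ (K - 1) < r := by omega
    have hrN' : r < N := by
      have : (r:ℤ) < N := by rw [hrz]; exact hrN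
      exact_mod_cast this
    set r' : ℕ := N - r with hr'
    have h1 : 1 ≤ r' := by omega
    have h2 : r' < 2 ^ (K - 1) := by
      have : N = 2 * 2 ^ (K-1) := by rw [hN]; exact pow_split hK
      omega
    have hx : w K z - w K (-z) = -((mkB K X) ^ r' - (mkB K X) ^ (N - r')) := by
      rw [hzr, hzr', w_natCast, e2 r hrle]
      have : N - r' = r := by omega
      rw [this, hr']
      ring
    rw [hx]
    exact neg_mem (mem_base hK h1 h2)

end Stmt7Aux


open Stmt7Aux

/-- f_k = f·f'_k, f_k lies in the (-1)-eigenspace (the ℚ-span of the χ^r - χ^{N-r}),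
and f'_k lies in the image of ℤ[χ]/⟨1+χ+⋯+χ^{N-1}⟩. -/
theorem stmt7 (K k : ℕ) (hK : 1 ≤ K) (hk : Odd k) :
    fkQ K k = fQ K * fk'Q K k ∧
    fkQ K k ∈ Submodule.span ℚ
      {x : QB K | ∃ r : ℕ, 1 ≤ r ∧ r ≤ 2 ^ K / 2 - 1 ∧
        x = mkB K (X ^ r - X ^ (2 ^ K - r))} ∧
    ∃ p : Polynomial ℤ, fk'Q K k = mkB K (p.map (Int.castRingHom ℚ)) := by
  obtain ⟨m, hm⟩ := exists_m hK hk
  refine ⟨?_, ?_, ?_⟩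
  · -- part 1
    unfold fkQ fQ fk'Q
    rw [mkA (K := K) (k := k), mkS (K := K) (k := k)]
    have h1 : mkB K (1 - X ^ k)
        = (1 - mkB K X) * (∑ i ∈ Finset.range k, (mkB K X) ^ i) := by
      rw [map_sub, map_one, map_pow, uk_eq, one_sub_u_mul_S]
    have h2 : mkB K (1 + X ^ k)
        = (1 + mkB K X) * (∑ i ∈ Finset.range k, (-(mkB K X)) ^ i) := by
      rw [map_add, map_one, map_pow, uk_eq, one_add_u_mul_A hk]
    rw [h1, h2, Ring.mul_inverse_rev, map_add, map_one, map_sub, map_one]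
    ring
  · -- part 2
    have hmi := main_identity hK hk hm
    rw [hmi]
    apply Submodule.sum_mem
    intro j hj
    apply Submodule.smul_mem
    have hnd : ¬ ((2:ℤ) ^ (K - 1) ∣ ((k:ℤ) * ((j:ℤ) + 1))) := by
      intro hdvd
      have hj' : j + 1 < 2 ^ (K - 1) := by
        have h := Finset.mem_range.mp hj
        omega
      have hdn : (2:ℕ) ^ (K - 1) ∣ k * (j + 1) := by
        have hc : ((2 ^ (K-1) : ℕ) : ℤ) ∣ ((k * (j + 1) : ℕ) : ℤ) := by
          push_cast
          exact hdvd
        exact_mod_cast hc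
      have hcop : Nat.Coprime (2 ^ (K - 1)) k := (Nat.coprime_two_left.mpr hk).pow_left _
      have hd2 : (2:ℕ) ^ (K - 1) ∣ j + 1 := by
        exact Nat.Coprime.dvd_of_dvd_mul_left hcop hdn
      have := Nat.le_of_dvd (by omega) hd2
      omega
    exact mem_span_w hK hnd
  · -- part 3
    refine ⟨(∑ i ∈ Finset.range k, Polynomial.C ((-1:ℤ) ^ i) * X ^ i)
      * (∑ j ∈ Finset.range m, (X : Polynomial ℤ) ^ (k * j)), ?_⟩
    unfold fk'Q
    rw [mkA (K := K) (k := k), mkS (K := K) (k := k),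
      inv_of_mul_eq_one (S_mul_T (K := K) hm)]
    have hmap : ((∑ i ∈ Finset.range k, Polynomial.C ((-1:ℤ) ^ i) * X ^ i)
          * (∑ j ∈ Finset.range m, (X : Polynomial ℤ) ^ (k * j))).map (Int.castRingHom ℚ)
        = (∑ i ∈ Finset.range k, Polynomial.C ((-1:ℚ) ^ i) * X ^ i)
          * (∑ j ∈ Finset.range m, (X : Polynomial ℚ) ^ (k * j)) := by
      rw [Polynomial.map_mul, Polynomial.map_sum, Polynomial.map_sum]
      congr 1
      · refine Finset.sum_congr rfl fun i _ => ?_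
        rw [Polynomial.map_mul, Polynomial.map_pow, Polynomial.map_C, Polynomial.map_X]
        norm_num
      · refine Finset.sum_congr rfl fun j _ => ?_
        rw [Polynomial.map_pow, Polynomial.map_X]
    rw [hmap, map_mul, mkA (K := K) (k := k)]
    congr 1
    rw [map_sum]
    refine Finset.sum_congr rfl fun j _ => ?_
    rw [map_pow, pow_mul, uk_eq]
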